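/- Let R0 and F0 be dual Dyck sequences with rowsert(R0,F0) = (E,R), and suppose that no step of this run of rowsert applies Case 0. Then worsert(E,R) = (R0,F0). -/

import Mathlib

/-- A finite integer sequence is a *dual Dyck sequence* if each entry is at
least the previous entry plus 2. The empty sequence is allowed. -/
def DualDyck (x : List ℤ) : Prop := List.Chain' (fun a b => a + 2 ≤ b) x

/-- Length of the maximal `+2`-chain starting at the first position. -/
def chainUp : List ℤ → ℕ
  | [] => 0
  | [_] => 1
  | a :: b :: t => if b = a + 2 then chainUp (b :: t) + 1 else 1

/-- Length of the maximal `-2`-chain starting at the first position (used on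
reversed lists to measure maximal `+2`-chains ending at a given position). -/
def chainDown : List ℤ → ℕ
  | [] => 0
  | [_] => 1
  | a :: b :: t => if b = a - 2 then chainDown (b :: t) + 1 else 1

/-- One step of row insertion.  The state is the current row `R` and the
current input with head `a` and tail `F`.  The result is
`(newly evicted block, new row, new remaining input)`. -/
def rowsertStep (R : List ℤ) (a : ℤ) (F : List ℤ) :
    List ℤ × List ℤ × List ℤ :=
  match R.findIdx? (fun r => decide (a ≤ r + 1)) with
  | none => ([], R ++ [a], F)                                   -- Case 0
  | some i =>
    let ri := R.getD i 0
    if a ≤ ri then ([ri], R.set i a, F)                         -- Case 1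
    else
      let j := chainUp (R.drop i)
      let k := chainUp (a :: F)
      if j ≤ k then                                             -- Case 2
        ((R.drop i).take j,
         R.take i ++ (a :: F).take j ++ R.drop (i + j),
         (a :: F).drop j)
      else                                                      -- Case 3
        ((a :: F).take k, R, (a :: F).drop k)

/-- Fuel-indexed run of row insertion on state `(E, R, F)`. -/
def rowsertAux : ℕ → List ℤ → List ℤ → List ℤ → List ℤ × List ℤ
  | 0, E, R, _ => (E, R)
  | _ + 1, E, R, [] => (E, R)
  | fuel + 1, E, R, a :: F =>
      let s := rowsertStep R a F
      rowsertAux fuel (E ++ s.1) s.2.1 s.2.2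

/-- Row insertion `rowsert(R₀, F₀) = (E, R)`. -/
def rowsert (R0 F0 : List ℤ) : List ℤ × List ℤ :=
  rowsertAux F0.length [] R0 F0

/-- The run of row insertion from row `R` and input `F` never applies
Case 0, i.e. at every step the comparison index search succeeds. -/
def RowsertNoCase0 : ℕ → List ℤ → List ℤ → Prop
  | 0, _, _ => True
  | _ + 1, _, [] => True
  | fuel + 1, R, a :: F =>
      (R.findIdx? (fun r => decide (a ≤ r + 1))).isSome = true ∧
      (let s := rowsertStep R a F
       RowsertNoCase0 fuel s.2.1 s.2.2)

/-- Index of the *last* entry of `R` satisfying `p`. -/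
def findIdxFromRight? (p : ℤ → Bool) (R : List ℤ) : Option ℕ :=
  match R.reverse.findIdx? p with
  | none => none
  | some k => some (R.length - 1 - k)

/-- One step of reverse row insertion on the state `(E, R, F)` with `E`
nonempty. -/
def worsertStep (E R F : List ℤ) : List ℤ × List ℤ × List ℤ :=
  let b := E.getLastD 0
  match findIdxFromRight? (fun r => decide (r - 1 ≤ b)) R with
  | none => (E.dropLast, b :: R, F)                              -- Case 0
  | some i =>
    let ri := R.getD i 0
    if ri ≤ b then (E.dropLast, R.set i b, ri :: F)              -- Case 1
    else
      let j := chainDown ((R.take (i + 1)).reverse)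
      let k := chainDown E.reverse
      if j ≤ k then                                              -- Case 2
        (E.take (E.length - j),
         R.take (i + 1 - j) ++ E.drop (E.length - j) ++ R.drop (i + 1),
         (R.take (i + 1)).drop (i + 1 - j) ++ F)
      else                                                       -- Case 3
        (E.take (E.length - k), R, E.drop (E.length - k) ++ F)

/-- Fuel-indexed run of reverse row insertion on the state `(E, R, F)`. -/
def worsertAux : ℕ → List ℤ → List ℤ → List ℤ → List ℤ × List ℤ
  | 0, _, R, F => (R, F)
  | fuel + 1, E, R, F =>
      if E = [] then (R, F)
      else
        let s := worsertStep E R F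
        worsertAux fuel s.1 s.2.1 s.2.2

/-- Reverse row insertion `worsert(E₀, R₀) = (R, F)`. -/
def worsert (E0 R0 : List ℤ) : List ℤ × List ℤ :=
  worsertAux E0.length E0 R0 []
section Helpers

open List

theorem findIdx?_eq_some_of' {α} (p : α → Bool) (l : List α) (i : ℕ)
    (hi : i < l.length) (hp : p l[i] = true)
    (hmin : ∀ j (hj : j < l.length), j < i → p l[j] = false) :
    l.findIdx? p = some i := by
  rw [List.findIdx?_eq_some_iff_findIdx_eq]
  refine ⟨hi, ?_⟩
  have hex : ∃ x ∈ l, p x = true := ⟨l[i], List.getElem_mem hi, hp⟩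
  have h1 : l.findIdx p < l.length := List.findIdx_lt_length_of_exists hex
  by_contra hne
  rcases lt_or_gt_of_ne hne with h | h
  · have := hmin _ h1 h
    have := @List.findIdx_getElem _ p l h1
    simp_all
  · have := List.not_of_lt_findIdx h
    simp_all

theorem of_findIdx?_eq_some {α} {p : α → Bool} {l : List α} {i : ℕ}
    (h : l.findIdx? p = some i) :
    ∃ hi : i < l.length, p l[i] = true ∧ ∀ j (hj : j < l.length), j < i → p l[j] = false := by
  rw [List.findIdx?_eq_some_iff_findIdx_eq] at h
  obtain ⟨hi, hfi⟩ := h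
  subst hfi
  exact ⟨hi, List.findIdx_getElem, fun j hj hji => List.not_of_lt_findIdx hji⟩

theorem findIdxFromRight?_eq_some_of (p : ℤ → Bool) (l : List ℤ) (i : ℕ)
    (hi : i < l.length) (hp : p l[i] = true)
    (hmax : ∀ j (hj : j < l.length), i < j → p l[j] = false) :
    findIdxFromRight? p l = some i := by
  have hrev : l.reverse.findIdx? p = some (l.length - 1 - i) := by
    apply findIdx?_eq_some_of' p l.reverse _ (by simp only [List.length_reverse]; omega)
    · rw [List.getElem_reverse]
      have h1 : l.length - 1 - (l.length - 1 - i) = i := by omega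
      simp only [h1, hp]
    · intro j hj hji
      rw [List.getElem_reverse]
      simp only [List.length_reverse] at hj
      exact hmax _ (by omega) (by omega)
  simp only [findIdxFromRight?, hrev]
  congr 1
  omega

theorem chainUp_le_length : ∀ l : List ℤ, chainUp l ≤ l.length
  | [] => by simp [chainUp]
  | [_] => by simp [chainUp]
  | a :: b :: t => by
      have := chainUp_le_length (b :: t)
      simp only [chainUp]
      split <;> simp_all <;> omega

theorem chainUp_pos : ∀ l : List ℤ, l ≠ [] → 0 < chainUp l
  | [], h => absurd rfl h
  | [_], _ => by simp [chainUp]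
  | _ :: _ :: _, _ => by simp only [chainUp]; split <;> simp

theorem chainUp_getElem : ∀ (l : List ℤ) (t : ℕ) (h : t < chainUp l),
    l[t]'(by have h1 := chainUp_le_length l; omega) =
      l[0]'(by have h1 := chainUp_le_length l; omega) + 2 * t
  | [], t, h => by simp [chainUp] at h
  | [_], t, h => by
      simp [chainUp] at h
      subst h; simp
  | a :: b :: s, t, h => by
      match t with
      | 0 => simp
      | t + 1 =>
        simp only [chainUp] at h
        split at h
        · rename_i hb
          have ih := chainUp_getElem (b :: s) t (by omega)
          simp only [List.getElem_cons_succ]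
          simp only [List.getElem_cons_zero] at ih ⊢
          rw [ih, hb]; push_cast; ring
        · omega

theorem chainUp_junction : ∀ (l : List ℤ) (n : ℕ), chainUp l = n + 1 →
    ∀ (h : n + 1 < l.length), l[n + 1] ≠ l[n] + 2
  | [], n, hn, h => by simp at h
  | [_], n, hn, h => by simp only [List.length_cons, List.length_nil] at h; omega
  | a :: b :: s, n, hn, h => by
      by_cases hb : b = a + 2
      · simp only [chainUp, if_pos hb] at hn
        have hpos := chainUp_pos (b :: s) (by simp)
        obtain ⟨m, hm⟩ : ∃ m, n = m + 1 := ⟨n - 1, by omega⟩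
        subst hm
        have ih := chainUp_junction (b :: s) m (by omega) (by simp at h ⊢; omega)
        simpa using ih
      · simp only [chainUp, if_neg hb] at hn
        have : n = 0 := by omega
        subst this
        simpa using hb

theorem chainUp_ge : ∀ (l : List ℤ) (m : ℕ) (hm : m ≤ l.length)
    (hc : ∀ t (h : t + 1 < m), l[t + 1]'(by omega) = l[t]'(by omega) + 2), m ≤ chainUp l
  | [], m, hm, _ => by simpa [chainUp] using hm
  | [_], m, hm, _ => by simp [chainUp] at hm ⊢; omega
  | a :: b :: s, m, hm, hc => by
      rcases Nat.lt_or_ge m 2 with h2 | h2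
      · have := chainUp_pos (a :: b :: s) (by simp); omega
      · have hb : b = a + 2 := by
          have := hc 0 (by omega); simpa using this
        have ih := chainUp_ge (b :: s) (m - 1) (by simp at hm ⊢; omega)
          (fun t ht => by
            have := hc (t + 1) (by omega)
            simpa using this)
        simp only [chainUp, if_pos hb]
        omega

theorem chainUp_le_of_junction (l : List ℤ) (n : ℕ) (hn : n + 1 < l.length)
    (hj : l[n + 1] ≠ l[n] + 2) : chainUp l ≤ n + 1 := by
  by_contra h
  push_neg at h
  have e1 := chainUp_getElem l (n + 1) h
  have e2 := chainUp_getElem l n (by omega)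
  apply hj
  rw [e1, e2]
  push_cast; ring

theorem chainUp_eq_of (l : List ℤ) (m : ℕ) (hm : m + 1 ≤ l.length)
    (hc : ∀ t (h : t + 1 ≤ m), l[t + 1]'(by omega) = l[t]'(by omega) + 2)
    (hj : ∀ (h : m + 1 < l.length), l[m + 1] ≠ l[m] + 2) : chainUp l = m + 1 := by
  have h1 := chainUp_ge l (m + 1) hm (fun t ht => hc t (by omega))
  rcases Nat.lt_or_ge (m + 1) l.length with h | h
  · exact le_antisymm (chainUp_le_of_junction l m h (hj h)) h1
  · exact le_antisymm (le_trans (chainUp_le_length l) (by omega)) h1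

theorem chainDown_eq_chainUp_neg : ∀ l : List ℤ, chainDown l = chainUp (l.map (fun x => -x))
  | [] => by simp [chainDown, chainUp]
  | [_] => by simp [chainDown, chainUp]
  | a :: b :: s => by
      have ih := chainDown_eq_chainUp_neg (b :: s)
      simp only [chainDown, chainUp, List.map_cons] at ih ⊢
      by_cases hb : b = a - 2
      · rw [if_pos hb, if_pos (by omega), ih]
      · rw [if_neg hb, if_neg (by omega)]

theorem chainDown_le_length (l : List ℤ) : chainDown l ≤ l.length := by
  rw [chainDown_eq_chainUp_neg]
  have := chainUp_le_length (l.map (fun x => -x))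
  simpa using this

theorem chainDown_pos (l : List ℤ) (h : l ≠ []) : 0 < chainDown l := by
  rw [chainDown_eq_chainUp_neg]
  exact chainUp_pos _ (by simpa using h)

theorem chainDown_ge (l : List ℤ) (m : ℕ) (hm : m ≤ l.length)
    (hc : ∀ t (h : t + 1 < m), l[t + 1]'(by omega) = l[t]'(by omega) - 2) :
    m ≤ chainDown l := by
  rw [chainDown_eq_chainUp_neg]
  apply chainUp_ge _ m (by simpa using hm)
  intro t ht
  simp only [List.getElem_map]
  have := hc t ht
  omega

theorem chainDown_eq_of (l : List ℤ) (m : ℕ) (hm : m + 1 ≤ l.length)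
    (hc : ∀ t (h : t + 1 ≤ m), l[t + 1]'(by omega) = l[t]'(by omega) - 2)
    (hj : ∀ (h : m + 1 < l.length), l[m + 1] ≠ l[m] - 2) : chainDown l = m + 1 := by
  rw [chainDown_eq_chainUp_neg]
  apply chainUp_eq_of _ m (by simpa using hm)
  · intro t ht
    simp only [List.getElem_map]
    have := hc t ht
    omega
  · intro h
    simp only [List.getElem_map]
    have := hj (by simpa using h)
    omega

end Helpers
section PartB
open List

theorem dd_pair {R : List ℤ} (hR : DualDyck R) {s t : ℕ} (hst : s < t) (ht : t < R.length) :
    R[s]'(by omega) + 2 ≤ R[t] := by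
  haveI : IsTrans ℤ (fun a b : ℤ => a + 2 ≤ b) := ⟨fun a b c h1 h2 => by omega⟩
  have hp : List.Pairwise (fun a b : ℤ => a + 2 ≤ b) R := List.isChain_iff_pairwise.mp hR
  exact List.pairwise_iff_getElem.mp hp s t (by omega) ht hst

theorem dd_mono {R : List ℤ} (hR : DualDyck R) {s t : ℕ} (hst : s ≤ t) (ht : t < R.length) :
    R[s]'(by omega) ≤ R[t] := by
  rcases eq_or_lt_of_le hst with rfl | h
  · rfl
  · have := dd_pair hR h ht; omega

theorem dd_adj {R : List ℤ} (hR : DualDyck R) {t : ℕ} (ht : t + 1 < R.length) :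
    R[t]'(by omega) + 2 ≤ R[t + 1] := dd_pair hR (Nat.lt_succ_self t) ht

theorem worsertAux_nil (n : ℕ) (R F : List ℤ) : worsertAux n [] R F = (R, F) := by
  cases n <;> simp [worsertAux]

theorem findIdxFromRight?_ne_nil {p : ℤ → Bool} {R : List ℤ} {i : ℕ}
    (h : findIdxFromRight? p R = some i) : R ≠ [] := by
  rintro rfl
  simp [findIdxFromRight?] at h

theorem worsertStep_length_lt (E R F : List ℤ) (hE : E ≠ []) :
    (worsertStep E R F).1.length < E.length := by
  have hEpos : 0 < E.length := List.length_pos_iff.mpr hE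
  rcases hfind : findIdxFromRight? (fun r => decide (r - 1 ≤ E.getLastD 0)) R with _ | i
  · simp only [worsertStep, hfind, List.length_dropLast]; omega
  · have hRne := findIdxFromRight?_ne_nil hfind
    have hj : 0 < chainDown ((R.take (i + 1)).reverse) := by
      apply chainDown_pos
      simp only [ne_eq, List.reverse_eq_nil_iff, List.take_eq_nil_iff]
      push_neg
      exact ⟨by omega, hRne⟩
    have hk : 0 < chainDown E.reverse :=
      chainDown_pos _ (by simpa using hE)
    simp only [worsertStep, hfind]
    split
    · simp only [List.length_dropLast]; omega
    · split <;> simp only [List.length_take] <;> omega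

theorem worsertAux_congr : ∀ (n m : ℕ) (E R F : List ℤ), E.length ≤ n → E.length ≤ m →
    worsertAux n E R F = worsertAux m E R F := by
  intro n
  induction n with
  | zero =>
    intro m E R F hn hm
    have : E = [] := by
      cases E <;> simp_all
    subst this
    rw [worsertAux_nil]
    cases m <;> simp [worsertAux]
  | succ n ih =>
    intro m E R F hn hm
    by_cases hE : E = []
    · subst hE; rw [worsertAux_nil, worsertAux_nil]
    · have hEpos : 0 < E.length := List.length_pos_iff.mpr hE
      obtain ⟨m', rfl⟩ : ∃ m', m = m' + 1 := ⟨m - 1, by omega⟩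
      have hlt := worsertStep_length_lt E R F hE
      simp only [worsertAux, if_neg hE]
      exact ih m' _ _ _ (by omega) (by omega)
end PartB
section PartC
open List

theorem set_getElem_self' (l : List ℤ) (i : ℕ) (h : i < l.length) : l.set i (l[i]) = l := by
  apply List.ext_getElem
  · simp
  · intro n h1 h2
    simp only [List.getElem_set]
    split
    · subst ‹i = n›; rfl
    · rfl

theorem getD_eq' {l : List ℤ} {i : ℕ} (h : i < l.length) : l.getD i 0 = l[i] := by
  rw [List.getD_eq_getElem?_getD, List.getElem?_eq_getElem h]; rfl

theorem getLastD_append_getElem (E X : List ℤ) (h : 0 < X.length) :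
    (E ++ X).getLastD 0 = X[X.length - 1] := by
  rw [List.getLastD_eq_getLast?, List.getLast?_append, List.getLast?_eq_getElem? (l := X),
    List.getElem?_eq_getElem (by omega)]
  rfl

/-- Case 1 inversion. -/
theorem case1_rev (R F G E : List ℤ) (a : ℤ) (i : ℕ) (hR : DualDyck R)
    (hi : i < R.length) (hle : a ≤ R[i])
    (hmin : ∀ t (ht : t < R.length), t < i → R[t] ≤ a - 2) :
    worsertStep (E ++ [R[i]]) (R.set i a) (F ++ G) = (E, R, a :: (F ++ G)) := by
  have hb : (E ++ [R[i]]).getLastD 0 = R[i] := List.getLastD_concat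
  have hfind : findIdxFromRight? (fun r => decide (r - 1 ≤ (E ++ [R[i]]).getLastD 0))
      (R.set i a) = some i := by
    rw [hb]
    apply findIdxFromRight?_eq_some_of _ _ i (by simpa using hi)
    · simp only [List.getElem_set, if_pos rfl]
      exact decide_eq_true (by omega)
    · intro t ht hti
      simp only [List.length_set] at ht
      have : (R.set i a)[t]'(by simpa using ht) = R[t] := by
        rw [List.getElem_set, if_neg (by omega : ¬ i = t)]
      rw [this]
      have := dd_pair hR hti ht
      exact decide_eq_false (by omega)
  have hgd : (R.set i a).getD i 0 = a := by
    rw [getD_eq' (by simpa using hi)]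
    simp [List.getElem_set]
  rw [hb] at hfind
  simp only [worsertStep, hb, hfind, hgd, if_pos hle, List.dropLast_concat, List.set_set]
  rw [set_getElem_self']

end PartC
section PartC2
open List

theorem gE (l : List ℤ) {s t : ℕ} (h : s = t) (hs : s < l.length) :
    l[s]'hs = l[t]'(h ▸ hs) := by subst h; rfl

/-- Case 2 inversion. -/
theorem case2_rev (R F G E : List ℤ) (a : ℤ) (i m : ℕ) (hR : DualDyck R)
    (hi : i < R.length) (ha : a = R[i] + 1)
    (hj : chainUp (R.drop i) = m + 1) (hjk : m + 1 ≤ chainUp (a :: F))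
    (hmin : ∀ t (ht : t < R.length), t < i → R[t] ≤ a - 2) :
    worsertStep (E ++ (R.drop i).take (m + 1))
      (R.take i ++ (a :: F).take (m + 1) ++ R.drop (i + (m + 1)))
      ((a :: F).drop (m + 1) ++ G) = (E, R, a :: (F ++ G)) := by
  have hjn : i + (m + 1) ≤ R.length := by
    have h1 := chainUp_le_length (R.drop i)
    rw [hj] at h1
    simp only [List.length_drop] at h1
    omega
  have hkF : m + 1 ≤ F.length + 1 := by
    have := chainUp_le_length (a :: F)
    simp only [List.length_cons] at this
    omega
  have hchainR : ∀ t (h : t < m + 1), R[i + t]'(by omega) = R[i] + 2 * t := by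
    intro t h
    have h2 := chainUp_getElem (R.drop i) t (by omega)
    rw [List.getElem_drop, List.getElem_drop] at h2
    exact h2
  have hchainF : ∀ t (h : t < chainUp (a :: F)),
      (a :: F)[t]'(by have := chainUp_le_length (a :: F); omega) = a + 2 * t := by
    intro t h
    have h2 := chainUp_getElem (a :: F) t h
    simpa using h2
  have hjuncR : ∀ (h : i + m + 1 < R.length), R[i + m]'(by omega) + 3 ≤ R[i + m + 1]'(by omega) := by
    intro h
    have h1 := chainUp_junction (R.drop i) m hj (by simp only [List.length_drop]; omega)
    rw [List.getElem_drop, List.getElem_drop] at h1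
    have h1' : R[i + m + 1]'(by omega) ≠ R[i + m]'(by omega) + 2 := h1
    have h2 := dd_adj hR (t := i + m) (by omega)
    omega
  have lenA : (R.take i).length = i := by simp; omega
  have lenY : ((a :: F).take (m + 1)).length = m + 1 := by simp; omega
  have lenX : ((R.drop i).take (m + 1)).length = m + 1 := by simp; omega
  have hRdec : R.take i ++ ((R.drop i).take (m + 1) ++ R.drop (i + (m + 1))) = R := by
    rw [← List.drop_drop, List.take_append_drop, List.take_append_drop]
  have lenR'' : (R.take i ++ (a :: F).take (m + 1) ++ R.drop (i + (m + 1))).length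
      = R.length := by
    simp only [List.length_append, lenA, lenY, List.length_drop]; omega
  have hXval : ∀ t (h : t < m + 1), ((R.drop i).take (m + 1))[t]'(by omega) = R[i] + 2 * t := by
    intro t h
    rw [List.getElem_take, List.getElem_drop]
    exact hchainR t h
  have hYval : ∀ t (h : t < m + 1), ((a :: F).take (m + 1))[t]'(by omega) = a + 2 * t := by
    intro t h
    rw [List.getElem_take]
    exact hchainF t (by omega)
  have hg2 : ∀ t (ht : t < m + 1),
      (R.take i ++ (a :: F).take (m + 1) ++ R.drop (i + (m + 1)))[i + t]'(by omega)
        = a + 2 * t := by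
    intro t ht
    rw [List.getElem_append_left (by rw [List.length_append, lenA, lenY]; omega)]
    rw [List.getElem_append_right (by rw [lenA]; omega)]
    rw [gE _ (show i + t - (R.take i).length = t by rw [lenA]; omega)]
    exact hYval t ht
  have hg3 : ∀ t (ht1 : i + m + 1 ≤ t) (ht2 : t < R.length),
      (R.take i ++ (a :: F).take (m + 1) ++ R.drop (i + (m + 1)))[t]'(by omega) = R[t] := by
    intro t ht1 ht2
    rw [List.getElem_append_right (by rw [List.length_append, lenA, lenY]; omega)]
    rw [List.getElem_drop]
    rw [gE R (show i + (m + 1) + (t - (R.take i ++ (a :: F).take (m + 1)).length) = t by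
      rw [List.length_append, lenA, lenY]; omega)]
  have hb : (E ++ (R.drop i).take (m + 1)).getLastD 0 = R[i] + 2 * m := by
    rw [getLastD_append_getElem E _ (by omega)]
    rw [gE _ (show ((R.drop i).take (m + 1)).length - 1 = m by rw [lenX]; omega)]
    exact hXval m (by omega)
  have hfind : findIdxFromRight? (fun r => decide (r - 1 ≤ R[i] + 2 * m))
      (R.take i ++ (a :: F).take (m + 1) ++ R.drop (i + (m + 1))) = some (i + m) := by
    apply findIdxFromRight?_eq_some_of _ _ (i + m) (by omega)
    · rw [hg2 m (by omega)]
      exact decide_eq_true (by omega)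
    · intro t ht hti
      rw [lenR''] at ht
      rw [hg3 t (by omega) ht]
      have h1 : R[i + m + 1]'(by omega) ≤ R[t] := dd_mono hR (by omega) ht
      have h2 := hjuncR (by omega)
      have h3 := hchainR m (by omega)
      exact decide_eq_false (by omega)
  have hgd : (R.take i ++ (a :: F).take (m + 1) ++ R.drop (i + (m + 1))).getD (i + m) 0
      = a + 2 * m := by
    rw [getD_eq' (by omega)]
    exact hg2 m (by omega)
  have htake : (R.take i ++ (a :: F).take (m + 1) ++ R.drop (i + (m + 1))).take (i + m + 1)
      = R.take i ++ (a :: F).take (m + 1) := by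
    exact List.take_left' (by rw [List.length_append, lenA, lenY]; omega)
  have lenAY : (R.take i ++ (a :: F).take (m + 1)).length = i + m + 1 := by
    rw [List.length_append, lenA, lenY]; omega
  have hgAY : ∀ s (hs : s ≤ m),
      (R.take i ++ (a :: F).take (m + 1)).reverse[s]'(by rw [List.length_reverse, lenAY]; omega)
        = a + 2 * ((m - s : ℕ) : ℤ) := by
    intro s hs
    rw [List.getElem_reverse]
    rw [gE _ (show (R.take i ++ (a :: F).take (m + 1)).length - 1 - s = i + (m - s) by
      rw [lenAY]; omega)]
    rw [List.getElem_append_right (by rw [lenA]; omega)]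
    rw [gE _ (show i + (m - s) - (R.take i).length = m - s by rw [lenA]; omega)]
    exact hYval (m - s) (by omega)
  have hj' : chainDown ((R.take i ++ (a :: F).take (m + 1)).reverse) = m + 1 := by
    apply chainDown_eq_of _ m (by rw [List.length_reverse, lenAY]; omega)
    · intro t ht
      rw [hgAY (t + 1) (by omega), hgAY t (by omega)]
      have he : (m - t : ℕ) = (m - (t + 1) : ℕ) + 1 := by omega
      rw [he]; push_cast; ring
    · intro h
      have h0i : 0 < i := by rw [List.length_reverse, lenAY] at h; omega
      rw [hgAY m (by omega)]
      rw [List.getElem_reverse]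
      rw [gE _ (show (R.take i ++ (a :: F).take (m + 1)).length - 1 - (m + 1) = i - 1 by
        rw [lenAY]; omega)]
      rw [List.getElem_append_left (by rw [lenA]; omega)]
      rw [List.getElem_take]
      have h2 := dd_adj hR (t := i - 1) (by omega)
      have h2' : R[i - 1]'(by omega) + 2 ≤ R[i] := by
        rw [gE R (show i - 1 + 1 = i by omega)] at h2
        exact h2
      simp only [Nat.sub_self, Nat.cast_zero, mul_zero, add_zero]
      omega
  have hk' : m + 1 ≤ chainDown ((E ++ (R.drop i).take (m + 1)).reverse) := by
    have hgEX : ∀ s (hs : s ≤ m),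
        (E ++ (R.drop i).take (m + 1)).reverse[s]'(by
          rw [List.length_reverse, List.length_append, lenX]; omega)
          = R[i] + 2 * ((m - s : ℕ) : ℤ) := by
      intro s hs
      rw [List.getElem_reverse]
      rw [gE _ (show (E ++ (R.drop i).take (m + 1)).length - 1 - s = E.length + (m - s) by
        rw [List.length_append, lenX]; omega)]
      rw [List.getElem_append_right (by omega)]
      rw [gE _ (show E.length + (m - s) - E.length = m - s by omega)]
      exact hXval (m - s) (by omega)
    apply chainDown_ge _ (m + 1) (by rw [List.length_reverse, List.length_append, lenX]; omega)
    intro t ht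
    rw [hgEX (t + 1) (by omega), hgEX t (by omega)]
    have he : (m - t : ℕ) = (m - (t + 1) : ℕ) + 1 := by omega
    rw [he]; push_cast; ring
  simp only [worsertStep, hb, hfind, hgd, htake, hj']
  rw [if_neg (by omega : ¬ (a + 2 * (m : ℤ) ≤ R[i] + 2 * (m : ℤ)))]
  rw [if_pos hk']
  have e1 : (E ++ (R.drop i).take (m + 1)).length - (m + 1) = E.length := by
    rw [List.length_append, lenX]; omega
  have e2 : i + m + 1 - (m + 1) = i := by omega
  rw [e1, e2]
  rw [List.take_left' rfl, List.drop_left' rfl]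
  rw [List.drop_left' lenAY]
  rw [List.drop_left' lenA]
  rw [show R.take i ++ (a :: F).take (m + 1) ++ R.drop (i + (m + 1))
      = R.take i ++ ((a :: F).take (m + 1) ++ R.drop (i + (m + 1))) from List.append_assoc _ _ _]
  rw [List.take_left' lenA]
  have hfin1 : R.take i ++ (R.drop i).take (m + 1) ++ R.drop (i + (m + 1)) = R := by
    rw [List.append_assoc, hRdec]
  have hfin2 : (a :: F).take (m + 1) ++ ((a :: F).drop (m + 1) ++ G) = a :: (F ++ G) := by
    rw [← List.append_assoc, List.take_append_drop]
    rfl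
  rw [hfin1, hfin2]
end PartC2
section PartC3
open List

/-- Case 3 inversion. -/
theorem case3_rev (R F G E : List ℤ) (a : ℤ) (i m : ℕ) (hR : DualDyck R)
    (hi : i < R.length) (ha : a = R[i] + 1)
    (hkv : chainUp (a :: F) = m + 1) (hjk : m + 1 < chainUp (R.drop i))
    (hjunc : ∀ b ∈ E.getLast?, b ≠ a - 2) :
    worsertStep (E ++ (a :: F).take (m + 1)) R ((a :: F).drop (m + 1) ++ G)
      = (E, R, a :: (F ++ G)) := by
  have hjn : i + (chainUp (R.drop i)) ≤ R.length := by
    have h1 := chainUp_le_length (R.drop i)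
    simp only [List.length_drop] at h1
    omega
  have him : i + m + 1 < R.length := by omega
  have hkF : m + 1 ≤ F.length + 1 := by
    have := chainUp_le_length (a :: F)
    rw [hkv] at this
    simp only [List.length_cons] at this
    omega
  have hchainR : ∀ t (h : t < chainUp (R.drop i)), R[i + t]'(by omega) = R[i] + 2 * t := by
    intro t h
    have h2 := chainUp_getElem (R.drop i) t h
    rw [List.getElem_drop, List.getElem_drop] at h2
    exact h2
  have hchainF : ∀ t (h : t < m + 1),
      (a :: F)[t]'(by have h9 := chainUp_le_length (a :: F); rw [hkv] at h9; omega) = a + 2 * t := by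
    intro t h
    have h2 := chainUp_getElem (a :: F) t (by omega)
    simpa using h2
  have lenX : ((a :: F).take (m + 1)).length = m + 1 := by simp; omega
  have hXval : ∀ t (h : t < m + 1), ((a :: F).take (m + 1))[t]'(by omega) = a + 2 * t := by
    intro t h
    rw [List.getElem_take]
    exact hchainF t h
  have hb : (E ++ (a :: F).take (m + 1)).getLastD 0 = a + 2 * m := by
    rw [getLastD_append_getElem E _ (by omega)]
    rw [gE _ (show ((a :: F).take (m + 1)).length - 1 = m by rw [lenX]; omega)]
    exact hXval m (by omega)
  have hval : R[i + m + 1]'(by omega) = a + 2 * m + 1 := by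
    have h1 := hchainR (m + 1) (by omega)
    have h1' : R[i + m + 1]'(by omega) = R[i] + 2 * ((m : ℤ) + 1) := by
      rw [gE R (show i + m + 1 = i + (m + 1) by omega)]
      have := hchainR (m + 1) (by omega)
      rw [this]; push_cast; ring
    rw [h1']; omega
  have hfind : findIdxFromRight? (fun r => decide (r - 1 ≤ a + 2 * m)) R
      = some (i + m + 1) := by
    apply findIdxFromRight?_eq_some_of _ _ (i + m + 1) (by omega)
    · rw [hval]
      exact decide_eq_true (by omega)
    · intro t ht hti
      have h1 : R[i + m + 1]'(by omega) + 2 ≤ R[t] := dd_pair hR (by omega) ht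
      rw [hval] at h1
      exact decide_eq_false (by omega)
  have hgd : R.getD (i + m + 1) 0 = a + 2 * m + 1 := by
    rw [getD_eq' (by omega)]
    exact hval
  have hj' : m + 2 ≤ chainDown ((R.take (i + m + 1 + 1)).reverse) := by
    have lenT : (R.take (i + m + 2)).length = i + m + 2 := by simp; omega
    have hgT : ∀ s (hs : s ≤ m + 1),
        (R.take (i + m + 2)).reverse[s]'(by rw [List.length_reverse, lenT]; omega)
          = R[i] + 2 * ((m + 1 - s : ℕ) : ℤ) := by
      intro s hs
      rw [List.getElem_reverse]
      rw [gE _ (show (R.take (i + m + 2)).length - 1 - s = i + (m + 1 - s) by rw [lenT]; omega)]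
      rw [List.getElem_take]
      exact hchainR (m + 1 - s) (by omega)
    apply chainDown_ge _ (m + 2) (by rw [List.length_reverse, lenT]; omega)
    intro t ht
    rw [hgT (t + 1) (by omega), hgT t (by omega)]
    have he : (m + 1 - t : ℕ) = (m + 1 - (t + 1) : ℕ) + 1 := by omega
    rw [he]; push_cast; ring
  have hk' : chainDown ((E ++ (a :: F).take (m + 1)).reverse) = m + 1 := by
    have lenEX : (E ++ (a :: F).take (m + 1)).length = E.length + (m + 1) := by
      rw [List.length_append, lenX]
    have hgEX : ∀ s (hs : s ≤ m),
        (E ++ (a :: F).take (m + 1)).reverse[s]'(by rw [List.length_reverse, lenEX]; omega)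
          = a + 2 * ((m - s : ℕ) : ℤ) := by
      intro s hs
      rw [List.getElem_reverse]
      rw [gE _ (show (E ++ (a :: F).take (m + 1)).length - 1 - s = E.length + (m - s) by
        rw [lenEX]; omega)]
      rw [List.getElem_append_right (by omega)]
      rw [gE _ (show E.length + (m - s) - E.length = m - s by omega)]
      exact hXval (m - s) (by omega)
    apply chainDown_eq_of _ m (by rw [List.length_reverse, lenEX]; omega)
    · intro t ht
      rw [hgEX (t + 1) (by omega), hgEX t (by omega)]
      have he : (m - t : ℕ) = (m - (t + 1) : ℕ) + 1 := by omega
      rw [he]; push_cast; ring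
    · intro h
      have hE : 0 < E.length := by rw [List.length_reverse, lenEX] at h; omega
      rw [hgEX m (by omega)]
      rw [List.getElem_reverse]
      rw [gE _ (show (E ++ (a :: F).take (m + 1)).length - 1 - (m + 1) = E.length - 1 by
        rw [lenEX]; omega)]
      rw [List.getElem_append_left (by omega)]
      have hlast : E.getLast? = some (E[E.length - 1]'(by omega)) := by
        rw [List.getLast?_eq_getElem?, List.getElem?_eq_getElem (by omega)]
      have := hjunc _ (by rw [hlast]; rfl)
      simp only [Nat.sub_self, Nat.cast_zero, mul_zero, add_zero]
      omega
  simp only [worsertStep, hb, hfind, hgd, hk']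
  rw [if_neg (by omega : ¬ (a + 2 * (m : ℤ) + 1 ≤ a + 2 * (m : ℤ)))]
  rw [if_neg (by omega : ¬ (chainDown ((R.take (i + m + 1 + 1)).reverse) ≤ m + 1))]
  have e1 : (E ++ (a :: F).take (m + 1)).length - (m + 1) = E.length := by
    rw [List.length_append, lenX]; omega
  rw [e1]
  rw [List.take_left' rfl, List.drop_left' rfl]
  have hfin2 : (a :: F).take (m + 1) ++ ((a :: F).drop (m + 1) ++ G) = a :: (F ++ G) := by
    rw [← List.append_assoc, List.take_append_drop]
    rfl
  rw [hfin2]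
end PartC3
section PartD
open List

def InvE (E R F : List ℤ) : Prop :=
  ∀ b ∈ E.getLast?, ∀ a ∈ F.head?, b + 3 ≤ a ∨ ∀ x ∈ R, x ≠ b + 1

theorem dyck_set (R : List ℤ) (a : ℤ) (i : ℕ) (hR : DualDyck R) (hi : i < R.length)
    (hle : a ≤ R[i]) (hmin : ∀ t (ht : t < R.length), t < i → R[t] ≤ a - 2) :
    DualDyck (R.set i a) := by
  rw [DualDyck, List.Chain', List.isChain_iff_getElem]
  intro t ht
  simp only [List.length_set] at ht
  simp only [List.get_eq_getElem, List.getElem_set]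
  have hadj := dd_adj hR (t := t) (by omega)
  rcases Nat.lt_trichotomy i t with h | h | h
  · rw [if_neg (by omega : ¬ i = t), if_neg (by omega : ¬ i = t + 1)]
    exact hadj
  · subst h
    rw [if_pos rfl, if_neg (by omega : ¬ i = i + 1)]
    omega
  · rcases Nat.lt_or_ge t (i - 1) with h2 | h2
    · rw [if_neg (by omega : ¬ i = t), if_neg (by omega : ¬ i = t + 1)]
      exact hadj
    · have hti : i = t + 1 := by omega
      rw [if_neg (by omega : ¬ i = t), if_pos hti]
      have := hmin t (by omega) (by omega)
      omega

theorem dyck_row2 (R F : List ℤ) (a : ℤ) (i m : ℕ) (hR : DualDyck R)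
    (hF : DualDyck (a :: F)) (hi : i < R.length) (ha : a = R[i] + 1)
    (hj : chainUp (R.drop i) = m + 1) (hjk : m + 1 ≤ chainUp (a :: F))
    (hmin : ∀ t (ht : t < R.length), t < i → R[t] ≤ a - 2) :
    DualDyck (R.take i ++ (a :: F).take (m + 1) ++ R.drop (i + (m + 1))) := by
  have hjn : i + (m + 1) ≤ R.length := by
    have h1 := chainUp_le_length (R.drop i)
    rw [hj] at h1
    simp only [List.length_drop] at h1
    omega
  have hkF : m + 1 ≤ F.length + 1 := by
    have h1 := chainUp_le_length (a :: F)
    simp only [List.length_cons] at h1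
    omega
  have lenA : (R.take i).length = i := by simp; omega
  have lenY : ((a :: F).take (m + 1)).length = m + 1 := by simp; omega
  have hchainR : ∀ t (h : t < m + 1), R[i + t]'(by omega) = R[i] + 2 * t := by
    intro t h
    have h2 := chainUp_getElem (R.drop i) t (by omega)
    rw [List.getElem_drop, List.getElem_drop] at h2
    exact h2
  have hYlast : ((a :: F).take (m + 1)).getLast? = some (a + 2 * m) := by
    rw [List.getLast?_eq_getElem?, List.getElem?_eq_getElem (by rw [lenY]; omega)]
    congr 1
    rw [gE _ (show ((a :: F).take (m + 1)).length - 1 = m by rw [lenY]; omega)]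
    rw [List.getElem_take]
    have h2 := chainUp_getElem (a :: F) m (by omega)
    simpa using h2
  rw [DualDyck, List.Chain', List.isChain_append, List.isChain_append]
  refine ⟨⟨hR.take i, hF.take (m + 1), ?_⟩, hR.drop _, ?_⟩
  · -- junction A → Y
    intro x hx y hy
    have h0i : 0 < i := by
      rcases Nat.eq_zero_or_pos i with h | h
      · subst h; simp at hx
      · exact h
    have hxval : x = R[i - 1]'(by omega) := by
      rw [List.getLast?_eq_getElem?, List.getElem?_eq_getElem (by rw [lenA]; omega)] at hx
      have h2 : (R.take i)[(R.take i).length - 1]'(by omega) = R[i - 1]'(by omega) := by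
        rw [gE _ (show (R.take i).length - 1 = i - 1 by rw [lenA])]
        rw [List.getElem_take]
      rw [h2] at hx
      exact (Option.some_injective _ hx).symm
    have hyval : y = a := by
      rcases hkF with _
      have : ((a :: F).take (m + 1)).head? = some a := by
        cases hF' : (a :: F).take (m + 1) with
        | nil => rw [hF'] at hy; simp at hy
        | cons z zs =>
          have : z = a := by
            have h3 := congrArg (fun l => l[0]?) hF'
            simpa [List.getElem?_take, List.getElem?_eq_getElem] using h3.symm
          rw [this]; rfl
      rw [this] at hy
      exact (Option.some_injective _ hy).symm
    subst hxval hyval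
    have h2 := dd_adj hR (t := i - 1) (by omega)
    rw [gE R (show i - 1 + 1 = i by omega)] at h2
    omega
  · -- junction (A ++ Y) → C
    intro x hx y hy
    rw [List.getLast?_append, hYlast] at hx
    simp only [Option.some_or] at hx
    have hxval : x = a + 2 * m := (Option.some_injective _ hx).symm
    rw [List.head?_drop] at hy
    have hlen : i + (m + 1) < R.length := by
      by_contra hcon
      rw [List.getElem?_eq_none (by omega)] at hy
      simp at hy
    rw [List.getElem?_eq_getElem hlen] at hy
    have hyval : y = R[i + (m + 1)] := (Option.some_injective _ hy).symm
    subst hxval hyval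
    have hjunc := chainUp_junction (R.drop i) m hj (by simp only [List.length_drop]; omega)
    rw [List.getElem_drop, List.getElem_drop] at hjunc
    have h2 := dd_adj hR (t := i + m) (by omega)
    have h3 : R[i + m]'(by omega) = R[i] + 2 * m := hchainR m (by omega)
    have h4 : R[i + (m + 1)]'(by omega) = R[i + m + 1]'(by omega) := by
      rw [gE R (show i + (m + 1) = i + m + 1 by omega)]
    have h5 : R[i + m + 1]'(by omega) ≠ R[i + m]'(by omega) + 2 := hjunc
    omega

theorem inv_case1 (R F G : List ℤ) (a : ℤ) (i : ℕ) (E : List ℤ) (hR : DualDyck R)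
    (hi : i < R.length) (hle : a ≤ R[i])
    (hmin : ∀ t (ht : t < R.length), t < i → R[t] ≤ a - 2) :
    InvE (E ++ [R[i]]) (R.set i a) F := by
  intro b hb a' _
  right
  intro x hx
  rw [List.getLast?_append] at hb
  simp only [List.getLast?_singleton, Option.or_some] at hb
  have hbval : b = R[i] := (Option.some_injective _ hb).symm
  subst hbval
  rw [List.mem_iff_getElem] at hx
  obtain ⟨t, ht, hxval⟩ := hx
  simp only [List.length_set] at ht
  rw [List.getElem_set] at hxval
  subst hxval
  rcases Nat.lt_trichotomy i t with h | h | h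
  · rw [if_neg (by omega)]
    have := dd_pair hR h ht
    omega
  · subst h
    rw [if_pos rfl]
    omega
  · rw [if_neg (by omega)]
    have := hmin t ht h
    omega

end PartD
section PartD2
open List

theorem getLast?_take_eq (l : List ℤ) (m : ℕ) (h : m < l.length) :
    (l.take (m + 1)).getLast? = some (l[m]) := by
  have hlen : (l.take (m + 1)).length = m + 1 := by simp; omega
  rw [List.getLast?_eq_getElem?, List.getElem?_eq_getElem (by rw [hlen]; omega)]
  congr 1
  rw [gE _ (show (l.take (m + 1)).length - 1 = m by rw [hlen]; omega), List.getElem_take]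

theorem inv_case2 (R F E : List ℤ) (a : ℤ) (i m : ℕ) (hR : DualDyck R)
    (hF : DualDyck (a :: F)) (hi : i < R.length)
    (ha : a = R[i] + 1) (hj : chainUp (R.drop i) = m + 1)
    (hjk : m + 1 ≤ chainUp (a :: F)) :
    InvE (E ++ (R.drop i).take (m + 1))
      (R.take i ++ (a :: F).take (m + 1) ++ R.drop (i + (m + 1)))
      ((a :: F).drop (m + 1)) := by
  intro b hb a' ha'
  left
  have hjn : i + (m + 1) ≤ R.length := by
    have h1 := chainUp_le_length (R.drop i)
    rw [hj] at h1
    simp only [List.length_drop] at h1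
    omega
  have hXlast : ((R.drop i).take (m + 1)).getLast? = some (R[i] + 2 * m) := by
    rw [getLast?_take_eq (R.drop i) m (by simp; omega)]
    congr 1
    rw [List.getElem_drop]
    have h2 := chainUp_getElem (R.drop i) m (by omega)
    rw [List.getElem_drop, List.getElem_drop] at h2
    exact h2
  rw [List.getLast?_append, hXlast] at hb
  simp only [Option.some_or] at hb
  have hbval : b = R[i] + 2 * m := (Option.some_injective _ hb).symm
  rw [List.head?_drop] at ha'
  have hm1 : m + 1 < (a :: F).length := by
    by_contra hcon
    rw [List.getElem?_eq_none (by omega)] at ha'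
    simp at ha'
  rw [List.getElem?_eq_getElem hm1] at ha'
  have haval : a' = (a :: F)[m + 1] := (Option.some_injective _ ha').symm
  have h2 := dd_adj hF (t := m) (by omega)
  have h3 : (a :: F)[m]'(by omega) = a + 2 * m := by
    have := chainUp_getElem (a :: F) m (by omega)
    simpa using this
  subst hbval haval
  omega

theorem inv_case3 (R F E : List ℤ) (a : ℤ)  (m : ℕ)
    (hF : DualDyck (a :: F)) (hkv : chainUp (a :: F) = m + 1) :
    InvE (E ++ (a :: F).take (m + 1)) R ((a :: F).drop (m + 1)) := by
  intro b hb a' ha'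
  left
  have hkF : m + 1 ≤ F.length + 1 := by
    have h1 := chainUp_le_length (a :: F)
    simp only [List.length_cons] at h1
    omega
  have hXlast : ((a :: F).take (m + 1)).getLast? = some (a + 2 * m) := by
    rw [getLast?_take_eq (a :: F) m (by simp; omega)]
    congr 1
    have := chainUp_getElem (a :: F) m (by omega)
    simpa using this
  rw [List.getLast?_append, hXlast] at hb
  simp only [Option.some_or] at hb
  have hbval : b = a + 2 * m := (Option.some_injective _ hb).symm
  rw [List.head?_drop] at ha'
  have hm1 : m + 1 < (a :: F).length := by
    by_contra hcon
    rw [List.getElem?_eq_none (by omega)] at ha'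
    simp at ha'
  rw [List.getElem?_eq_getElem hm1] at ha'
  have haval : a' = (a :: F)[m + 1] := (Option.some_injective _ ha').symm
  have h2 := dd_adj hF (t := m) (by omega)
  have h3 : (a :: F)[m]'(by omega) = a + 2 * m := by
    have := chainUp_getElem (a :: F) m (by omega)
    simpa using this
  have h4 : (a :: F)[m + 1] ≠ (a :: F)[m]'(by omega) + 2 :=
    chainUp_junction (a :: F) m hkv hm1
  subst hbval haval
  omega

theorem junc_of_inv (E R F : List ℤ) (a : ℤ) (i : ℕ) (hinv : InvE E R (a :: F))
    (hi : i < R.length) (ha : a = R[i] + 1) : ∀ b ∈ E.getLast?, b ≠ a - 2 := by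
  intro b hb
  rcases hinv b hb a rfl with h | h
  · omega
  · have := h (R[i]) (List.getElem_mem hi)
    omega

end PartD2
section PartE
open List

theorem main_lemma : ∀ (fuel : ℕ) (R F E : List ℤ), DualDyck R → DualDyck F → InvE E R F →
    RowsertNoCase0 fuel R F → F.length ≤ fuel → ∀ G : List ℤ,
    worsertAux (rowsertAux fuel E R F).1.length (rowsertAux fuel E R F).1
      (rowsertAux fuel E R F).2 G = worsertAux E.length E R (F ++ G) := by
  intro fuel
  induction fuel with
  | zero =>
    intro R F E hR hF hinv hnc hlen G
    have hFnil : F = [] := List.eq_nil_of_length_eq_zero (by omega)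
    subst hFnil
    simp only [rowsertAux, List.nil_append]
  | succ fuel ih =>
    intro R F E hR hF hinv hnc hlen G
    cases F with
    | nil => simp only [rowsertAux, List.nil_append]
    | cons a F' =>
      obtain ⟨hsome, hnc'⟩ := hnc
      rw [Option.isSome_iff_exists] at hsome
      obtain ⟨i, hfind⟩ := hsome
      obtain ⟨hi, hp, hmin'⟩ := _root_.of_findIdx?_eq_some hfind
      have hple : a ≤ R[i] + 1 := by simpa using hp
      have hmin : ∀ t (ht : t < R.length), t < i → R[t] ≤ a - 2 := by
        intro t ht h
        have h2 := hmin' t ht h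
        simp only [decide_eq_false_iff_not, not_le] at h2
        omega
      have hgd : R.getD i 0 = R[i] := getD_eq' hi
      have hF' : DualDyck F' := hF.tail
      have hlenF : F'.length ≤ fuel := by
        simp only [List.length_cons] at hlen; omega
      by_cases hle : a ≤ R[i]
      · -- Case 1
        have hstep : rowsertStep R a F' = ([R[i]], R.set i a, F') := by
          simp only [rowsertStep, hfind, hgd, if_pos hle]
        have hR1 := dyck_set R a i hR hi hle hmin
        have hinv1 := inv_case1 R F' G a i E hR hi hle hmin
        have hnc'' : RowsertNoCase0 fuel (R.set i a) F' := by
          have h2 := hnc'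
          rw [hstep] at h2
          exact h2
        have hrw : rowsertAux (fuel + 1) E R (a :: F')
            = rowsertAux fuel (E ++ [R[i]]) (R.set i a) F' := by
          simp only [rowsertAux, hstep]
        rw [hrw, ih (R.set i a) F' (E ++ [R[i]]) hR1 hF' hinv1 hnc'' hlenF G]
        have hlen1 : (E ++ [R[i]]).length = E.length + 1 := by simp
        rw [hlen1]
        simp only [worsertAux]
        rw [if_neg (by simp : ¬ (E ++ [R[i]] = []))]
        rw [case1_rev R F' G E a i hR hi hle hmin]
        rfl
      · have ha : a = R[i] + 1 := by omega
        have hdne : R.drop i ≠ [] := by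
          intro hcon
          have h2 := congrArg List.length hcon
          simp only [List.length_drop, List.length_nil] at h2
          omega
        by_cases hjk : chainUp (R.drop i) ≤ chainUp (a :: F')
        · -- Case 2
          obtain ⟨m, hm⟩ : ∃ m, chainUp (R.drop i) = m + 1 :=
            ⟨chainUp (R.drop i) - 1, by have := chainUp_pos _ hdne; omega⟩
          rw [hm] at hjk
          have hjn : i + (m + 1) ≤ R.length := by
            have h1 := chainUp_le_length (R.drop i)
            rw [hm] at h1
            simp only [List.length_drop] at h1
            omega
          have hkF : m + 1 ≤ F'.length + 1 := by
            have h1 := chainUp_le_length (a :: F')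
            simp only [List.length_cons] at h1
            omega
          have hstep : rowsertStep R a F' = ((R.drop i).take (m + 1),
              R.take i ++ (a :: F').take (m + 1) ++ R.drop (i + (m + 1)),
              (a :: F').drop (m + 1)) := by
            simp only [rowsertStep, hfind, hgd, if_neg hle, hm, if_pos hjk]
          have hR2 := dyck_row2 R F' a i m hR hF hi ha hm hjk hmin
          have hF2 : DualDyck ((a :: F').drop (m + 1)) := hF.drop (m + 1)
          have hinv2 := inv_case2 R F' E a i m hR hF hi ha hm hjk
          have hnc'' : RowsertNoCase0 fuel
              (R.take i ++ (a :: F').take (m + 1) ++ R.drop (i + (m + 1)))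
              ((a :: F').drop (m + 1)) := by
            have h2 := hnc'
            rw [hstep] at h2
            exact h2
          have hlen2 : ((a :: F').drop (m + 1)).length ≤ fuel := by
            simp only [List.length_drop, List.length_cons]
            omega
          have hrw : rowsertAux (fuel + 1) E R (a :: F')
              = rowsertAux fuel (E ++ (R.drop i).take (m + 1))
                (R.take i ++ (a :: F').take (m + 1) ++ R.drop (i + (m + 1)))
                ((a :: F').drop (m + 1)) := by
            simp only [rowsertAux, hstep]
          rw [hrw, ih _ _ _ hR2 hF2 hinv2 hnc'' hlen2 G]
          have hlen3 : (E ++ (R.drop i).take (m + 1)).length = (E.length + m) + 1 := by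
            simp only [List.length_append, List.length_take, List.length_drop]
            omega
          rw [hlen3]
          simp only [worsertAux]
          rw [if_neg (show ¬ (E ++ (R.drop i).take (m + 1) = []) by
            intro hcon
            have h9 := congrArg List.length hcon
            rw [hlen3] at h9
            simp at h9)]
          rw [case2_rev R F' G E a i m hR hi ha hm hjk hmin]
          show worsertAux (E.length + m) E R (a :: (F' ++ G)) = worsertAux E.length E R (a :: (F' ++ G))
          exact worsertAux_congr _ _ _ _ _ (by omega) (le_refl _)
        · -- Case 3
          push_neg at hjk
          obtain ⟨m, hm⟩ : ∃ m, chainUp (a :: F') = m + 1 :=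
            ⟨chainUp (a :: F') - 1, by have := chainUp_pos (a :: F') (by simp); omega⟩
          rw [hm] at hjk
          have hkF : m + 1 ≤ F'.length + 1 := by
            have h1 := chainUp_le_length (a :: F')
            rw [hm] at h1
            simp only [List.length_cons] at h1
            omega
          have hstep : rowsertStep R a F' = ((a :: F').take (m + 1), R,
              (a :: F').drop (m + 1)) := by
            simp only [rowsertStep, hfind, hgd, if_neg hle, hm, if_neg (by omega : ¬ (chainUp (R.drop i) ≤ m + 1))]
          have hF2 : DualDyck ((a :: F').drop (m + 1)) := hF.drop (m + 1)
          have hinv3 := inv_case3 R F' E a m hF hm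
          have hjunc := junc_of_inv E R F' a i hinv hi ha
          have hnc'' : RowsertNoCase0 fuel R ((a :: F').drop (m + 1)) := by
            have h2 := hnc'
            rw [hstep] at h2
            exact h2
          have hlen2 : ((a :: F').drop (m + 1)).length ≤ fuel := by
            simp only [List.length_drop, List.length_cons]
            omega
          have hrw : rowsertAux (fuel + 1) E R (a :: F')
              = rowsertAux fuel (E ++ (a :: F').take (m + 1)) R ((a :: F').drop (m + 1)) := by
            simp only [rowsertAux, hstep]
          rw [hrw, ih _ _ _ hR hF2 hinv3 hnc'' hlen2 G]
          have hlen3 : (E ++ (a :: F').take (m + 1)).length = (E.length + m) + 1 := by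
            simp only [List.length_append, List.length_take, List.length_cons]
            omega
          rw [hlen3]
          simp only [worsertAux]
          rw [if_neg (show ¬ (E ++ (a :: F').take (m + 1) = []) by
            intro hcon
            have h9 := congrArg List.length hcon
            rw [hlen3] at h9
            simp at h9)]
          rw [case3_rev R F' G E a i m hR hi ha hm hjk hjunc]
          show worsertAux (E.length + m) E R (a :: (F' ++ G)) = worsertAux E.length E R (a :: (F' ++ G))
          exact worsertAux_congr _ _ _ _ _ (by omega) (le_refl _)
end PartE
/-- **Global reversibility without Case 0.**  If `R₀, F₀` are dual Dyck
sequences, `rowsert(R₀, F₀) = (E, R)`, and no step of this row-insertion run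
applies Case 0, then `worsert(E, R) = (R₀, F₀)`. -/
theorem worsert_rowsert (R0 F0 E R : List ℤ)
    (hR0 : DualDyck R0) (hF0 : DualDyck F0)
    (h : rowsert R0 F0 = (E, R))
    (hnc : RowsertNoCase0 F0.length R0 F0) :
    worsert E R = (R0, F0) := by
  have hinv0 : InvE [] R0 F0 := by
    intro b hb
    simp at hb
  have hmain := main_lemma F0.length R0 F0 [] hR0 hF0 hinv0 hnc (le_refl _) []
  rw [rowsert] at h
  rw [h] at hmain
  simp only [List.length_nil] at hmain
  rw [worsertAux_nil] at hmain
  rw [List.append_nil] at hmain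
  exact hmain
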